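/- Suppose f : ℝ^d → ℝ is continuously differentiable, (m,b)-dissipative (i.e. ⟨x, ∇f(x)⟩ ≥ m‖x‖² - b for all x), and f(x) ≥ 0 for all x. Then for all x ∈ ℝ^d, f(x) ≥ (m/3)‖x‖² - (b/2)·log 3. -/

import Mathlib

open scoped RealInnerProductSpace

theorem stmt3 {d : ℕ} (f : EuclideanSpace ℝ (Fin d) → ℝ)
    (m b : ℝ) (hm : 0 < m) (hb : 0 ≤ b)
    (hf : ContDiff ℝ 1 f) (hpos : ∀ x, 0 ≤ f x)
    (hdiss : ∀ x : EuclideanSpace ℝ (Fin d), m * ‖x‖ ^ 2 - b ≤ ⟪x, gradient f x⟫) :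
    ∀ x : EuclideanSpace ℝ (Fin d), m / 3 * ‖x‖ ^ 2 - b / 2 * Real.log 3 ≤ f x := by
  intro x
  set c : ℝ := (Real.sqrt 3)⁻¹ with hcdef
  have h3 : (0:ℝ) < Real.sqrt 3 := Real.sqrt_pos.2 (by norm_num)
  have hc0 : 0 < c := inv_pos.2 h3
  have h31 : 1 ≤ Real.sqrt 3 := by
    nlinarith [Real.sq_sqrt (show (0:ℝ) ≤ 3 by norm_num), Real.sqrt_nonneg 3]
  have hc1 : c ≤ 1 := by
    rw [hcdef, inv_le_one_iff₀]
    right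
    exact h31
  have hdiff : Differentiable ℝ f := hf.differentiable one_ne_zero
  -- derivative of t ↦ f (t • x)
  have hg : ∀ t : ℝ, HasDerivAt (fun s : ℝ => f (s • x)) ⟪x, gradient f (t • x)⟫ t := by
    intro t
    have h1 : HasDerivAt (fun s : ℝ => s • x) x t := by
      simpa using (hasDerivAt_id t).smul_const x
    have h2 := ((hdiff (t • x)).hasFDerivAt).comp_hasDerivAt t h1
    have : (fderiv ℝ f (t • x)) x = ⟪x, gradient f (t • x)⟫ := by
      rw [real_inner_comm, gradient, InnerProductSpace.toDual_symm_apply]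
    rw [this] at h2; exact h2
  have hcontgrad : Continuous fun t : ℝ => ⟪x, gradient f (t • x)⟫ := by
    have h1 : Continuous (gradient f) := by
      have := hf.continuous_fderiv one_ne_zero
      exact (InnerProductSpace.toDual ℝ (EuclideanSpace ℝ (Fin d))).symm.continuous.comp this
    exact (continuous_const.inner (h1.comp (continuous_id.smul continuous_const)))
  have key : ∫ t in c..1, ⟪x, gradient f (t • x)⟫ = f ((1:ℝ) • x) - f (c • x) := by
    exact intervalIntegral.integral_eq_sub_of_hasDerivAt (fun t _ => hg t)
      (hcontgrad.intervalIntegrable c 1)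
  have hle : ∀ t ∈ Set.Icc c 1, m * t * ‖x‖ ^ 2 - b / t ≤ ⟪x, gradient f (t • x)⟫ := by
    intro t ht
    have ht0 : 0 < t := lt_of_lt_of_le hc0 ht.1
    have := hdiss (t • x)
    rw [inner_smul_left] at this
    simp only [RCLike.conj_to_real] at this
    have hnorm : ‖t • x‖ ^ 2 = t ^ 2 * ‖x‖ ^ 2 := by
      rw [norm_smul]; rw [Real.norm_eq_abs]; rw [mul_pow, sq_abs]
    rw [hnorm] at this
    have h2 : m * (t ^ 2 * ‖x‖ ^ 2) - b ≤ t * ⟪x, gradient f (t • x)⟫ := this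
    have hbt : b / t * t = b := div_mul_cancel₀ b (ne_of_gt ht0)
    nlinarith [h2, hbt, ht0]
  have hint1 : IntervalIntegrable (fun t : ℝ => m * t * ‖x‖ ^ 2 - b / t) MeasureTheory.volume c 1 := by
    apply ContinuousOn.intervalIntegrable
    apply ContinuousOn.sub
    · exact (continuous_const.mul continuous_id).mul continuous_const |>.continuousOn
    · apply ContinuousOn.div continuousOn_const continuousOn_id
      intro t ht
      rw [Set.uIcc_of_le hc1] at ht
      exact ne_of_gt (lt_of_lt_of_le hc0 ht.1)
  have hmono : ∫ t in c..1, (m * t * ‖x‖ ^ 2 - b / t) ≤ ∫ t in c..1, ⟪x, gradient f (t • x)⟫ :=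
    intervalIntegral.integral_mono_on hc1 hint1 (hcontgrad.intervalIntegrable c 1) hle
  have hint2 : IntervalIntegrable (fun t : ℝ => b / t) MeasureTheory.volume c 1 := by
    apply ContinuousOn.intervalIntegrable
    apply ContinuousOn.div continuousOn_const continuousOn_id
    intro t ht
    rw [Set.uIcc_of_le hc1] at ht
    exact ne_of_gt (lt_of_lt_of_le hc0 ht.1)
  have hcsq : c ^ 2 = 1 / 3 := by
    rw [hcdef, inv_pow, Real.sq_sqrt (by norm_num : (0:ℝ) ≤ 3)]
    norm_num
  have hlogc : Real.log c = -(Real.log 3 / 2) := by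
    rw [hcdef, Real.log_inv, Real.log_sqrt (by norm_num)]
  have hcalc : ∫ t in c..1, (m * t * ‖x‖ ^ 2 - b / t)
      = m * ‖x‖ ^ 2 * ((1 - c ^ 2) / 2) - b * (Real.log 3 / 2) := by
    have hi1 : ∫ t in c..1, m * t * ‖x‖ ^ 2 = m * ‖x‖ ^ 2 * ((1 - c ^ 2) / 2) := by
      have : (fun t : ℝ => m * t * ‖x‖ ^ 2) = fun t : ℝ => (m * ‖x‖ ^ 2) * t := by
        funext t; ring
      rw [this, intervalIntegral.integral_const_mul, integral_id]
      ring
    have hi2 : ∫ t in c..1, b / t = b * (Real.log 3 / 2) := by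
      have : (fun t : ℝ => b / t) = fun t : ℝ => b * (1 / t) := by
        funext t; ring
      rw [this, intervalIntegral.integral_const_mul, integral_one_div]
      · rw [Real.log_div one_ne_zero (ne_of_gt hc0), Real.log_one, hlogc]; ring
      · rw [Set.uIcc_of_le hc1]
        intro h
        exact absurd h.1 (not_le.2 hc0)
    have hint_a : IntervalIntegrable (fun t : ℝ => m * t * ‖x‖ ^ 2) MeasureTheory.volume c 1 :=
      ((continuous_const.mul continuous_id).mul continuous_const).intervalIntegrable c 1
    rw [intervalIntegral.integral_sub hint_a hint2, hi1, hi2]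
  have hfin : m * ‖x‖ ^ 2 * ((1 - c ^ 2) / 2) - b * (Real.log 3 / 2) ≤ f x - f (c • x) := by
    rw [← hcalc]
    calc _ ≤ ∫ t in c..1, ⟪x, gradient f (t • x)⟫ := hmono
    _ = f ((1:ℝ) • x) - f (c • x) := key
    _ = f x - f (c • x) := by rw [one_smul]
  have h0 := hpos (c • x)
  rw [hcsq] at hfin
  nlinarith [hfin]
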